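/- Let G be a finite group, U ≤ G a subgroup, R a commutative ring, and s, t ∈ R. Let G act on the set 𝒰(G) of subsets of G by (g, A) ↦ Ag⁻¹; for a subset A ⊆ G let U_A := {g ∈ G | Ag = A} be its stabilizer group and i_A := |A|/|U_A| the number of orbits of the right U_A-action on A. Then (s + t)^{(G:U)} = Σ_{G·A ∈ G\𝒰(G)} |(G/U_A)^U| · (s^{i_A} · t^{i_{G−A}})^{(U_A:U)}, where the sum is over a set of representatives A of the G-orbits of subsets of G, G−A denotes the complement of A in G, the exponent (U_A:U) means |U_A|/|U|, and any summand with |(G/U_A)^U| = 0 (which happens unless some conjugate of U is contained in U_A) is zero. -/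

import Mathlib

open MulAction

/-- Type synonym for `Set G`, carrying the right-translation action
`(g, A) ↦ Ag⁻¹` of `G` on the set `𝒰(G)` of subsets of `G`. -/
def RSet (G : Type u) : Type u := Set G

/-- The action `(g, A) ↦ Ag⁻¹` of `G` on the set of subsets of `G`. -/
instance RSet.instMulAction (G : Type u) [Group G] : MulAction G (RSet G) where
  smul g A := (fun a => a * g⁻¹) '' (A : Set G)
  one_smul A := by
    change Set G at A
    show (fun a => a * (1 : G)⁻¹) '' (A : Set G) = A
    simp
  mul_smul g h A := by
    change Set G at A
    show (fun a => a * (g * h)⁻¹) '' (A : Set G)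
        = (fun a => a * g⁻¹) '' ((fun a => a * h⁻¹) '' (A : Set G))
    rw [Set.image_image]
    simp [mul_assoc, mul_inv_rev]

/-- The stabilizer group `U_A = {g ∈ G | Ag = A}` of a subset `A ⊆ G` under the
right-translation action. -/
def rstab {G : Type u} [Group G] (A : Set G) : Subgroup G :=
  MulAction.stabilizer G (show RSet G from A)

/-- `i_A := |A|/|U_A|`, the number of orbits of the right `U_A`-action on `A`. -/
noncomputable def iA {G : Type u} [Group G] (A : Set G) : ℕ :=
  Nat.card A / Nat.card (rstab A)

section helpers
variable {G : Type u} [Group G]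

lemma rsmul_def (g : G) (A : RSet G) : g • A = (fun a => a * g⁻¹) '' (A : Set G) := rfl

lemma mem_rstab {A : Set G} {g : G} : g ∈ rstab A ↔ ∀ a : G, a * g ∈ A ↔ a ∈ A := by
  have him : (fun a => a * g⁻¹) '' A = (fun a : G => a * g) ⁻¹' A := by
    ext a
    constructor
    · rintro ⟨x, hx, rfl⟩
      simpa using hx
    · intro h
      exact ⟨a * g, h, by simp⟩
  change ((fun a => a * g⁻¹) '' A = A) ↔ _
  rw [him, Set.ext_iff]
  simp [Set.mem_preimage]

lemma rstab_compl (A : Set G) : rstab Aᶜ = rstab A := by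
  ext g
  simp only [mem_rstab, Set.mem_compl_iff]
  constructor <;> intro h a
  · exact not_iff_not.mp (h a)
  · exact not_iff_not.mpr (h a)

lemma card_saturated (K : Subgroup G) (A : Set G) (h : ∀ a ∈ A, ∀ k ∈ K, a * k ∈ A) :
    Nat.card A = Nat.card K * Nat.card ((QuotientGroup.mk : G → G ⧸ K) '' A) := by
  have hA : A = (QuotientGroup.mk : G → G ⧸ K) ⁻¹' ((QuotientGroup.mk : G → G ⧸ K) '' A) := by
    ext x
    simp only [Set.mem_preimage, Set.mem_image]
    constructor
    · exact fun hx => ⟨x, hx, rfl⟩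
    · rintro ⟨a, ha, hax⟩
      have hk : a⁻¹ * x ∈ K := (QuotientGroup.eq).mp hax
      have := h a ha _ hk
      simpa [mul_assoc] using this
  calc Nat.card A = Nat.card ((QuotientGroup.mk : G → G ⧸ K) ⁻¹'
        ((QuotientGroup.mk : G → G ⧸ K) '' A)) := by rw [← hA]
    _ = Nat.card (K × ((QuotientGroup.mk : G → G ⧸ K) '' A)) :=
        Nat.card_congr (QuotientGroup.preimageMkEquivSubgroupProdSet K _)
    _ = _ := by rw [Nat.card_prod]

lemma card_eq_rstab_mul_iA [Finite G] (A : Set G) :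
    Nat.card A = Nat.card (rstab A) * iA A := by
  have h := card_saturated (rstab A) A (fun a ha k hk => (mem_rstab.mp hk a).mpr ha)
  have hpos : 0 < Nat.card (rstab A) := Nat.card_pos
  rw [iA, h, Nat.mul_div_cancel_left _ hpos]

end helpers

section helpers2
variable {G : Type u} [Group G]

lemma card_rsmul (g : G) (A : Set G) :
    Nat.card (show Set G from g • (show RSet G from A)) = Nat.card A := by
  show Nat.card ((fun a => a * g⁻¹) '' A) = Nat.card A
  exact Nat.card_image_of_injective (mul_left_injective g⁻¹) A

lemma rstab_rsmul (g : G) (A : Set G) :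
    rstab (show Set G from g • (show RSet G from A)) =
      (rstab A).map (MulAut.conj g).toMonoidHom :=
  MulAction.stabilizer_smul_eq_stabilizer_map_conj g (show RSet G from A)

lemma card_rstab_rsmul (g : G) (A : Set G) :
    Nat.card (rstab (show Set G from g • (show RSet G from A))) = Nat.card (rstab A) := by
  rw [rstab_rsmul]
  exact (Nat.card_congr ((rstab A).equivMapOfInjective _
    (MulAut.conj g).injective).toEquiv).symm

lemma compl_rsmul (g : G) (A : Set G) :
    (show Set G from g • (show RSet G from A))ᶜ =
      (show Set G from g • (show RSet G from (Aᶜ : Set G))) := by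
  show ((fun a => a * g⁻¹) '' A)ᶜ = (fun a => a * g⁻¹) '' Aᶜ
  exact (Set.image_compl_eq (Equiv.mulRight g⁻¹).bijective).symm

lemma iA_rsmul (g : G) (A : Set G) :
    iA (show Set G from g • (show RSet G from A)) = iA A := by
  rw [iA, iA, card_rsmul, card_rstab_rsmul]

end helpers2

section helpers3
variable {G : Type u} [Group G]

lemma mk_mem_fixedPoints (U K : Subgroup G) (g : G) :
    (QuotientGroup.mk g : G ⧸ K) ∈ MulAction.fixedPoints U (G ⧸ K) ↔
      ∀ u ∈ U, g⁻¹ * u * g ∈ K := by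
  simp only [MulAction.mem_fixedPoints]
  constructor
  · intro h u hu
    have h2 : (QuotientGroup.mk (u⁻¹ * g) : G ⧸ K) = QuotientGroup.mk g :=
      h ⟨u⁻¹, inv_mem hu⟩
    have h3 := QuotientGroup.eq.mp h2
    simpa [mul_assoc] using h3
  · intro h u
    show (QuotientGroup.mk ((u : G) * g) : G ⧸ K) = QuotientGroup.mk g
    rw [QuotientGroup.eq]
    simpa [mul_assoc] using h (u : G)⁻¹ (inv_mem u.2)

lemma le_rstab_rsmul_iff (U : Subgroup G) (g : G) (A : Set G) :
    U ≤ rstab (show Set G from g • (show RSet G from A)) ↔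
      (QuotientGroup.mk g : G ⧸ rstab A) ∈
        MulAction.fixedPoints U (G ⧸ rstab A) := by
  rw [rstab_rsmul, mk_mem_fixedPoints]
  constructor
  · intro h u hu
    have := h hu
    rwa [Subgroup.mem_map_equiv, MulAut.conj_symm_apply] at this
  · intro h u hu
    rw [Subgroup.mem_map_equiv, MulAut.conj_symm_apply]
    exact h u hu

lemma count_fixed (U : Subgroup G) (A₀ : RSet G) :
    Nat.card {A : RSet G // A ∈ MulAction.orbit G A₀ ∧ U ≤ rstab (show Set G from A)} =
      Nat.card (MulAction.fixedPoints U (G ⧸ rstab (show Set G from A₀))) := by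
  apply Nat.card_congr
  refine ((Equiv.subtypeSubtypeEquivSubtypeInter _ _).symm.trans ?_)
  refine Equiv.trans ((MulAction.orbitEquivQuotientStabilizer G A₀).subtypeEquiv
    (q := fun y => U ≤ rstab (show Set G from
      ((MulAction.orbitEquivQuotientStabilizer G A₀).symm y : RSet G)))
    (fun x => ?_)) (Equiv.subtypeEquivRight (fun q => ?_))
  · simp only [Equiv.symm_apply_apply]
  · show U ≤ rstab (show Set G from
      ((MulAction.orbitEquivQuotientStabilizer G A₀).symm q : RSet G)) ↔ _
    induction q using QuotientGroup.induction_on with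
    | H g =>
      rw [show ((MulAction.orbitEquivQuotientStabilizer G A₀).symm
          (QuotientGroup.mk g) : RSet G) = g • A₀ from rfl]
      exact le_rstab_rsmul_iff U g A₀

end helpers3

section helpers4
variable {G : Type u} [Group G]

lemma saturated_preimage_image (K : Subgroup G) (A : Set G)
    (h : ∀ a ∈ A, ∀ k ∈ K, a * k ∈ A) :
    (QuotientGroup.mk : G → G ⧸ K) ⁻¹' ((QuotientGroup.mk : G → G ⧸ K) '' A) = A := by
  ext x
  simp only [Set.mem_preimage, Set.mem_image]
  constructor
  · rintro ⟨a, ha, hax⟩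
    have hk : a⁻¹ * x ∈ K := (QuotientGroup.eq).mp hax
    have := h a ha _ hk
    simpa [mul_assoc] using this
  · exact fun hx => ⟨x, hx, rfl⟩

lemma sat_of_le_rstab {U : Subgroup G} {A : Set G} (hU : U ≤ rstab A) :
    ∀ a ∈ A, ∀ k ∈ U, a * k ∈ A :=
  fun a ha k hk => (mem_rstab.mp (hU hk) a).mpr ha

lemma card_div_eq_card_quotient [Finite G] (U : Subgroup G) :
    Nat.card G / Nat.card U = Nat.card (G ⧸ U) := by
  rw [Subgroup.card_eq_card_quotient_mul_card_subgroup (s := U)]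
  exact Nat.mul_div_cancel _ Nat.card_pos

lemma term_eq [Finite G] {R : Type v} [CommRing R] (U : Subgroup G) (A : Set G)
    (hU : U ≤ rstab A) (s t : R) :
    s ^ (Nat.card A / Nat.card U) * t ^ (Nat.card (Aᶜ : Set G) / Nat.card U) =
      (s ^ iA A * t ^ iA (Aᶜ : Set G)) ^ (Nat.card (rstab A) / Nat.card U) := by
  have hUpos : 0 < Nat.card U := Nat.card_pos
  obtain ⟨m, hm⟩ := Subgroup.card_dvd_of_le hU
  have hmm : Nat.card (rstab A) / Nat.card U = m := by
    rw [hm, Nat.mul_div_cancel_left _ hUpos]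
  have h1 : Nat.card A / Nat.card U = m * iA A := by
    rw [card_eq_rstab_mul_iA A, hm, mul_assoc, Nat.mul_div_cancel_left _ hUpos]
  have h2 : Nat.card (Aᶜ : Set G) / Nat.card U = m * iA (Aᶜ : Set G) := by
    rw [card_eq_rstab_mul_iA (Aᶜ : Set G), rstab_compl, hm, mul_assoc,
      Nat.mul_div_cancel_left _ hUpos]
  rw [h1, h2, hmm, pow_mul', pow_mul', ← mul_pow]

lemma term_invariant [Finite G] {R : Type v} [CommRing R] (U : Subgroup G) (s t : R)
    {A B : RSet G} (h : A ∈ MulAction.orbit G B) :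
    (s ^ iA (show Set G from A) * t ^ iA ((show Set G from A)ᶜ)) ^
        (Nat.card (rstab (show Set G from A)) / Nat.card U) =
      (s ^ iA (show Set G from B) * t ^ iA ((show Set G from B)ᶜ)) ^
        (Nat.card (rstab (show Set G from B)) / Nat.card U) := by
  obtain ⟨g, hg⟩ := h
  have hA : (show Set G from A) =
      (show Set G from g • (show RSet G from (show Set G from B))) := by
    rw [← hg]
  rw [hA]
  exact congrArg₂ (fun x y => x ^ y)
    (congrArg₂ (· * ·) (congrArg (s ^ ·) (iA_rsmul g B))
      (congrArg (t ^ ·) ((congrArg iA (compl_rsmul g B)).trans (iA_rsmul g _))))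
    (congrArg (· / Nat.card U) (card_rstab_rsmul g B))

end helpers4


/-- For every subgroup `U ≤ G` and all `s, t` in a commutative ring `R`,
`(s + t)^{(G:U)} = Σ_{G·A ∈ G\𝒰(G)} |(G/U_A)^U| · (s^{i_A} · t^{i_{G−A}})^{(U_A:U)}`,
the sum being taken over representatives `A` of the orbits of the right-translation
action of `G` on the set of subsets of `G`. -/
theorem sum_ghost_component_formula (G : Type u) [Group G] [Fintype G] (U : Subgroup G)
    (R : Type v) [CommRing R] (s t : R) :
    (s + t) ^ (Nat.card G / Nat.card U) =
      ∑ᶠ C : MulAction.orbitRel.Quotient G (RSet G),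
        (Nat.card (MulAction.fixedPoints U
            (G ⧸ rstab (show Set G from Quotient.out C))) : R) *
          (s ^ iA (show Set G from Quotient.out C) *
            t ^ iA ((show Set G from Quotient.out C)ᶜ)) ^
            (Nat.card (rstab (show Set G from Quotient.out C)) / Nat.card U) := by
  classical
  haveI : Finite (RSet G) := inferInstanceAs (Finite (Set G))
  letI : Fintype (RSet G) := Fintype.ofFinite _
  letI : Fintype (MulAction.orbitRel.Quotient G (RSet G)) := Fintype.ofFinite _
  letI : Fintype (G ⧸ U) := Fintype.ofFinite _
  rw [finsum_eq_sum_of_fintype]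
  -- the quotient map
  set qm : RSet G → MulAction.orbitRel.Quotient G (RSet G) :=
    Quotient.mk (MulAction.orbitRel G (RSet G)) with hqm
  -- Step A : expand the power as a sum over subsets of G ⧸ U
  have stepA : (s + t) ^ (Nat.card G / Nat.card U) =
      ∑ S : Finset (G ⧸ U), s ^ S.card * t ^ Sᶜ.card := by
    rw [card_div_eq_card_quotient U, Nat.card_eq_fintype_card]
    calc (s + t) ^ Fintype.card (G ⧸ U) = ∏ _i : G ⧸ U, (s + t) := by
          rw [Finset.prod_const, Finset.card_univ]
      _ = ∑ T ∈ (Finset.univ : Finset (G ⧸ U)).powerset,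
            (∏ _i ∈ T, s) * ∏ _i ∈ Finset.univ \ T, t := Finset.prod_add _ _ _
      _ = ∑ S : Finset (G ⧸ U), s ^ S.card * t ^ Sᶜ.card := by
          rw [Finset.powerset_univ]
          refine Finset.sum_congr rfl fun S _ => ?_
          rw [Finset.prod_const, Finset.prod_const, Finset.compl_eq_univ_sdiff]
  -- Step B : reindex by the corresponding subsets of G
  have stepB : ∑ S : Finset (G ⧸ U), s ^ S.card * t ^ Sᶜ.card =
      ∑ A ∈ Finset.univ.filter (fun A : RSet G => U ≤ rstab (show Set G from A)),
        s ^ (Nat.card (show Set G from A) / Nat.card U) *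
          t ^ (Nat.card ((show Set G from A)ᶜ : Set G) / Nat.card U) := by
    have hsat : ∀ S : Finset (G ⧸ U),
        U ≤ rstab ((QuotientGroup.mk : G → G ⧸ U) ⁻¹' (S : Set (G ⧸ U))) := by
      intro S g hg
      rw [mem_rstab]
      intro a
      simp [Set.mem_preimage, QuotientGroup.mk_mul_of_mem a hg]
    have hcard : ∀ S : Finset (G ⧸ U),
        Nat.card ((QuotientGroup.mk : G → G ⧸ U) ⁻¹' (S : Set (G ⧸ U))) =
          Nat.card U * S.card := by
      intro S
      have h := card_saturated U _ (sat_of_le_rstab (hsat S))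
      rw [Set.image_preimage_eq _ QuotientGroup.mk_surjective] at h
      simpa [Nat.card_coe_set_eq, Set.ncard_coe_finset] using h
    have hUpos : 0 < Nat.card U := Nat.card_pos
    refine Finset.sum_bij'
      (fun S _ => (show RSet G from (QuotientGroup.mk : G → G ⧸ U) ⁻¹' (S : Set (G ⧸ U))))
      (fun A _ => (QuotientGroup.mk '' (show Set G from A) : Set (G ⧸ U)).toFinset)
      (fun S _ => ?_) (fun A hA => Finset.mem_univ _) (fun S _ => ?_) (fun A hA => ?_)
      (fun S _ => ?_)
    · simp only [Finset.mem_filter, Finset.mem_univ, true_and]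
      exact Finset.mem_filter.mpr ⟨Finset.mem_univ _, hsat S⟩
    · show (QuotientGroup.mk '' ((QuotientGroup.mk : G → G ⧸ U) ⁻¹'
          (S : Set (G ⧸ U)))).toFinset = S
      apply Finset.coe_injective
      rw [Set.coe_toFinset, Set.image_preimage_eq _ QuotientGroup.mk_surjective]
    · simp only [Finset.mem_filter, Finset.mem_univ, true_and] at hA
      show (show RSet G from (QuotientGroup.mk : G → G ⧸ U) ⁻¹'
        (((QuotientGroup.mk '' (show Set G from A) : Set (G ⧸ U)).toFinset : Finset (G ⧸ U)) :
          Set (G ⧸ U))) = A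
      rw [Set.coe_toFinset]
      exact saturated_preimage_image U _ (sat_of_le_rstab hA)
    · show s ^ S.card * t ^ Sᶜ.card =
          s ^ (Nat.card ((QuotientGroup.mk : G → G ⧸ U) ⁻¹' (S : Set (G ⧸ U))) / Nat.card U) *
            t ^ (Nat.card ((((QuotientGroup.mk : G → G ⧸ U) ⁻¹'
              (S : Set (G ⧸ U)))ᶜ : Set G)) / Nat.card U)
      have hc : ((QuotientGroup.mk : G → G ⧸ U) ⁻¹' (S : Set (G ⧸ U)))ᶜ =
          (QuotientGroup.mk : G → G ⧸ U) ⁻¹' ((Sᶜ : Finset (G ⧸ U)) : Set (G ⧸ U)) := by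
        rw [Finset.coe_compl, Set.preimage_compl]
      rw [hc, hcard S, hcard Sᶜ, Nat.mul_div_cancel_left _ hUpos,
        Nat.mul_div_cancel_left _ hUpos]
  -- Step C/D : turn the filtered sum into a full sum with an `if`, and rewrite terms
  have stepCD : ∑ A ∈ Finset.univ.filter (fun A : RSet G => U ≤ rstab (show Set G from A)),
        s ^ (Nat.card (show Set G from A) / Nat.card U) *
          t ^ (Nat.card ((show Set G from A)ᶜ : Set G) / Nat.card U) =
      ∑ A : RSet G, (if U ≤ rstab (show Set G from A) then
        (s ^ iA (show Set G from A) * t ^ iA ((show Set G from A)ᶜ)) ^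
          (Nat.card (rstab (show Set G from A)) / Nat.card U) else 0) := by
    rw [Finset.sum_filter]
    refine Finset.sum_congr rfl fun A _ => ?_
    by_cases h : U ≤ rstab (show Set G from A)
    · rw [if_pos h, if_pos h, term_eq U _ h s t]
    · rw [if_neg h, if_neg h]
  rw [stepA, stepB, stepCD, ← Finset.sum_fiberwise Finset.univ qm
    (fun A : RSet G => if U ≤ rstab (show Set G from A) then
      (s ^ iA (show Set G from A) * t ^ iA ((show Set G from A)ᶜ)) ^
        (Nat.card (rstab (show Set G from A)) / Nat.card U) else 0)]
  refine Finset.sum_congr rfl fun C _ => ?_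
  have hmem : ∀ A : RSet G, qm A = C ↔ A ∈ MulAction.orbit G (Quotient.out C) := by
    intro A
    constructor
    · intro h
      have h2 : qm A = qm (Quotient.out C) := by
        rw [h, hqm]; exact (Quotient.out_eq C).symm
      exact Quotient.exact h2
    · intro h
      rw [hqm]
      exact (Quotient.sound h).trans (Quotient.out_eq C)
  have hcount : (Finset.univ.filter (fun A : RSet G =>
      qm A = C ∧ U ≤ rstab (show Set G from A))).card =
      Nat.card (MulAction.fixedPoints U
        (G ⧸ rstab (show Set G from Quotient.out C))) := by
    calc (Finset.univ.filter (fun A : RSet G =>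
        qm A = C ∧ U ≤ rstab (show Set G from A))).card
        = Nat.card {A : RSet G // qm A = C ∧ U ≤ rstab (show Set G from A)} := by
          rw [Nat.card_eq_fintype_card, Fintype.card_subtype]
      _ = Nat.card {A : RSet G // A ∈ MulAction.orbit G (Quotient.out C) ∧
            U ≤ rstab (show Set G from A)} :=
          Nat.card_congr (Equiv.subtypeEquivRight fun A => and_congr_left' (hmem A))
      _ = _ := count_fixed U (Quotient.out C)
  calc ∑ A ∈ Finset.univ.filter (fun A : RSet G => qm A = C),
        (if U ≤ rstab (show Set G from A) then
          (s ^ iA (show Set G from A) * t ^ iA ((show Set G from A)ᶜ)) ^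
            (Nat.card (rstab (show Set G from A)) / Nat.card U) else 0)
      = ∑ A ∈ Finset.univ.filter (fun A : RSet G =>
            qm A = C ∧ U ≤ rstab (show Set G from A)),
          (s ^ iA (show Set G from A) * t ^ iA ((show Set G from A)ᶜ)) ^
            (Nat.card (rstab (show Set G from A)) / Nat.card U) := by
        rw [Finset.sum_filter, Finset.sum_filter]
        refine Finset.sum_congr rfl fun A _ => ?_
        by_cases h1 : qm A = C <;> by_cases h2 : U ≤ rstab (show Set G from A) <;>
          simp [h1, h2]
    _ = ∑ _A ∈ Finset.univ.filter (fun A : RSet G =>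
            qm A = C ∧ U ≤ rstab (show Set G from A)),
          (s ^ iA (show Set G from Quotient.out C) *
            t ^ iA ((show Set G from Quotient.out C)ᶜ)) ^
            (Nat.card (rstab (show Set G from Quotient.out C)) / Nat.card U) := by
        refine Finset.sum_congr rfl fun A hA => ?_
        rw [Finset.mem_filter] at hA
        exact term_invariant U s t ((hmem A).mp hA.2.1)
    _ = _ := by
        rw [Finset.sum_const, hcount, nsmul_eq_mul]
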